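/- For every 0 < p ≤ 1 and every C > 0 there exists a constant K = K(C, p) > 0 such that: whenever X is a p-Banach space over 𝔽 = ℂ and 𝒳 is a basis of X satisfying ‖f‖ ≤ C·‖f + g‖ for every f ∈ span{𝒳} and every g ∈ span{𝒳} ∩ X_+(𝒳) with supp(f) ∩ supp(g) = ∅, then ‖f‖ ≤ K·‖f + g‖ for every f, g ∈ X with supp(f) ∩ supp(g) = ∅; in particular 𝒳 is K-unconditional. -/

import Mathlib

open scoped BigOperators

noncomputable section

/-- A basis of a `p`-Banach space over `𝕜` (`𝕜 = ℝ` or `ℂ`), bundled with the `p`-norm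
`N`, the basis vectors `e`, and the biorthogonal functionals `coord`. -/
structure PBasis (𝕜 : Type*) [RCLike 𝕜] (X : Type*) [AddCommGroup X] [Module 𝕜 X]
    (p : ℝ) : Type _ where
  /-- the `p`-norm of the space -/
  N : X → ℝ
  N_nonneg : ∀ f : X, 0 ≤ N f
  N_eq_zero_iff : ∀ f : X, N f = 0 ↔ f = 0
  N_smul : ∀ (t : 𝕜) (f : X), N (t • f) = ‖t‖ * N f
  N_padd : ∀ f g : X, N (f + g) ^ p ≤ N f ^ p + N g ^ p
  /-- completeness with respect to the `p`-norm -/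
  complete : ∀ u : ℕ → X,
      (∀ ε : ℝ, 0 < ε → ∃ n₀ : ℕ, ∀ m n : ℕ, n₀ ≤ m → n₀ ≤ n → N (u m - u n) < ε) →
      ∃ f : X, ∀ ε : ℝ, 0 < ε → ∃ n₀ : ℕ, ∀ n : ℕ, n₀ ≤ n → N (u n - f) < ε
  /-- the basis vectors -/
  e : ℕ → X
  /-- the biorthogonal functionals -/
  coord : ℕ → X →ₗ[𝕜] 𝕜
  biorth : ∀ n m : ℕ, coord n (e m) = if n = m then (1 : 𝕜) else 0
  /-- the closed linear span of the basis vectors is the whole space -/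
  dense_span : ∀ f : X, ∀ ε : ℝ, 0 < ε →
      ∃ g ∈ Submodule.span 𝕜 (Set.range e), N (f - g) < ε
  e_bdd : ∃ c : ℝ, ∀ n : ℕ, N (e n) ≤ c
  coord_bdd : ∃ c : ℝ, ∀ (n : ℕ) (f : X), ‖coord n f‖ ≤ c * N f

namespace PBasis

variable {𝕜 : Type*} [RCLike 𝕜] {X : Type*} [AddCommGroup X] [Module 𝕜 X] {p : ℝ}

/-- The projection `P_A f = ∑_{n ∈ A} x_n^*(f) x_n`. -/
def proj (bs : PBasis 𝕜 X p) (A : Finset ℕ) (f : X) : X :=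
  ∑ n ∈ A, bs.coord n f • bs.e n

/-- The support of `f`. -/
def supp (bs : PBasis 𝕜 X p) (f : X) : Set ℕ := {n | bs.coord n f ≠ 0}

/-- `A` is a greedy set of `f`: `min_{n ∈ A} |x_n^*(f)| ≥ max_{m ∉ A} |x_m^*(f)|`. -/
def IsGreedySet (bs : PBasis 𝕜 X p) (f : X) (A : Finset ℕ) : Prop :=
  ∀ n ∈ A, ∀ m : ℕ, m ∉ A → ‖bs.coord m f‖ ≤ ‖bs.coord n f‖

/-- `𝟙_{ε,A} = ∑_{j ∈ A} ε_j x_j`. -/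
def indSign (bs : PBasis 𝕜 X p) (ε : ℕ → 𝕜) (A : Finset ℕ) : X :=
  ∑ j ∈ A, ε j • bs.e j

/-- `𝟙_A = ∑_{j ∈ A} x_j`. -/
def ind (bs : PBasis 𝕜 X p) (A : Finset ℕ) : X := ∑ j ∈ A, bs.e j

/-- `ε` is a sign on `A`. -/
def IsSign (ε : ℕ → 𝕜) (A : Finset ℕ) : Prop := ∀ j ∈ A, ‖ε j‖ = 1

/-- `min_{n ∈ A} |x_n^*(f)|`. -/
def minCoef (bs : PBasis 𝕜 X p) (f : X) (A : Finset ℕ) : ℝ :=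
  sInf ((fun n => ‖bs.coord n f‖) '' (A : Set ℕ))

/-- `‖f − P_A(f)‖ ≤ C·σ_m(f)` for every greedy set `A` of cardinality `m`. -/
def IsGreedyWith (bs : PBasis 𝕜 X p) (C : ℝ) : Prop :=
  ∀ (f : X) (A B : Finset ℕ) (a : ℕ → 𝕜), bs.IsGreedySet f A → B.card ≤ A.card →
    bs.N (f - bs.proj A f) ≤ C * bs.N (f - ∑ j ∈ B, a j • bs.e j)

/-- `‖f − P_A(f)‖ ≤ C·ρ_m(f)` for every greedy set `A` of cardinality `m`, where
`ρ_m(f) = inf {‖f − α 𝟙_{ε,B}‖ : |B| = m, ε sign}` and `α = min_{n ∈ A} |x_n^*(f)|`. -/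
def IsRGPCCWith (bs : PBasis 𝕜 X p) (C : ℝ) : Prop :=
  ∀ (f : X) (A B : Finset ℕ) (ε : ℕ → 𝕜), bs.IsGreedySet f A → B.card = A.card →
    IsSign ε B →
    bs.N (f - bs.proj A f) ≤ C * bs.N (f - ((bs.minCoef f A : ℝ) : 𝕜) • bs.indSign ε B)

/-- `‖f − P_A(f)‖ ≤ C·ϱ_m(f)` for every greedy set `A` of cardinality `m`, where
`ϱ_m(f) = inf {‖f − α 𝟙_B‖ : |B| = m}` and `α = min_{n ∈ A} |x_n^*(f)|`. -/
def IsURGPCCWith (bs : PBasis 𝕜 X p) (C : ℝ) : Prop :=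
  ∀ (f : X) (A B : Finset ℕ), bs.IsGreedySet f A → B.card = A.card →
    bs.N (f - bs.proj A f) ≤ C * bs.N (f - ((bs.minCoef f A : ℝ) : 𝕜) • bs.ind B)

/-- `K`-unconditionality. -/
def IsUncondWith (bs : PBasis 𝕜 X p) (K : ℝ) : Prop :=
  ∀ (A : Finset ℕ) (f : X), bs.N (bs.proj A f) ≤ K * bs.N f

/-- `C`-quasi-greediness. -/
def IsQuasiGreedyWith (bs : PBasis 𝕜 X p) (C : ℝ) : Prop :=
  ∀ (f : X) (A : Finset ℕ), bs.IsGreedySet f A → bs.N (f - bs.proj A f) ≤ C * bs.N f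

/-- `C`-almost-greediness. -/
def IsAlmostGreedyWith (bs : PBasis 𝕜 X p) (C : ℝ) : Prop :=
  ∀ (f : X) (A B : Finset ℕ), bs.IsGreedySet f A → B.card ≤ A.card →
    bs.N (f - bs.proj A f) ≤ C * bs.N (f - bs.proj B f)

/-- `D`-democracy. -/
def IsDemocraticWith (bs : PBasis 𝕜 X p) (D : ℝ) : Prop :=
  ∀ A B : Finset ℕ, A.card ≤ B.card → bs.N (bs.ind A) ≤ D * bs.N (bs.ind B)

/-- `D`-superdemocracy. -/
def IsSuperdemocraticWith (bs : PBasis 𝕜 X p) (D : ℝ) : Prop :=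
  ∀ (A B : Finset ℕ) (ε η : ℕ → 𝕜), A.card ≤ B.card → IsSign ε A → IsSign η B →
    bs.N (bs.indSign ε A) ≤ D * bs.N (bs.indSign η B)

/-- `A < B`, i.e. every element of `A` is smaller than every element of `B`. -/
def FinsetBefore (A B : Finset ℕ) : Prop := ∀ a ∈ A, ∀ b ∈ B, a < b

open scoped Classical in
/-- `sgn z = z/|z|` (with the convention `sgn 0 = 1`). -/
def sgn (z : 𝕜) : 𝕜 := if z = 0 then 1 else z / ((‖z‖ : ℝ) : 𝕜)

end PBasis

section Lemma32Aux

open Finset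

variable {X : Type*} [AddCommGroup X] [Module ℂ X] {p C : ℝ}

namespace PCLem

/-- The hypothesis of the theorem, packaged. -/
def Good (bs : PBasis ℂ X p) (C : ℝ) : Prop :=
  ∀ f g : X, f ∈ Submodule.span ℂ (Set.range bs.e) →
    g ∈ Submodule.span ℂ (Set.range bs.e) →
    (∀ n : ℕ, (bs.coord n g).im = 0 ∧ 0 ≤ (bs.coord n g).re) →
    Disjoint (bs.supp f) (bs.supp g) → bs.N f ≤ C * bs.N (f + g)

/-- constants -/
def gC (C p : ℝ) : ℝ := 1 + C ^ p
def tC (C p : ℝ) : ℝ := gC C p / (1 - (1/2 : ℝ) ^ p)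
def mC (C p : ℝ) : ℝ := 4 * tC C p
def JC (C p : ℝ) : ℕ := ⌈4 * Real.pi * (2 * mC C p * gC C p) ^ (1/p)⌉₊ + 1
def KPC (C p : ℝ) : ℝ := 1 + (JC C p : ℝ) * (4 * gC C p)
def KC (C p : ℝ) : ℝ := KPC C p ^ (1/p)

section NumFacts

variable (hp : 0 < p) (hC : 0 < C)
include hp

lemma r_nonneg : (0:ℝ) ≤ (1/2 : ℝ) ^ p := Real.rpow_nonneg (by norm_num) p

lemma r_lt_one : (1/2 : ℝ) ^ p < 1 := Real.rpow_lt_one (by norm_num) (by norm_num) hp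

lemma one_sub_r_pos : 0 < 1 - (1/2 : ℝ) ^ p := by linarith [r_lt_one hp]

include hC in
lemma gC_ge_one : 1 ≤ gC C p := by
  have : 0 ≤ C ^ p := Real.rpow_nonneg hC.le p
  simp only [gC]; linarith

include hC in
lemma gC_pos : 0 < gC C p := lt_of_lt_of_le one_pos (gC_ge_one hp hC)

include hC in
lemma tC_ge_one : 1 ≤ tC C p := by
  have h1 := one_sub_r_pos hp
  have h2 := gC_ge_one hp hC
  have h3 : 1 - (1/2:ℝ)^p ≤ 1 := by linarith [r_nonneg hp]
  rw [tC, le_div_iff₀ h1]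
  nlinarith

include hC in
lemma tC_pos : 0 < tC C p := lt_of_lt_of_le one_pos (tC_ge_one hp hC)

include hC in
lemma mC_ge_four : 4 ≤ mC C p := by
  have := tC_ge_one hp hC; simp only [mC]; linarith

include hC in
lemma mC_pos : 0 < mC C p := by linarith [mC_ge_four hp hC]

include hC in
lemma KPC_ge_one : 1 ≤ KPC C p := by
  have h1 : (0:ℝ) ≤ (JC C p : ℝ) := Nat.cast_nonneg _
  have h2 := gC_pos hp hC
  simp only [KPC]; nlinarith

include hC in
lemma KPC_pos : 0 < KPC C p := lt_of_lt_of_le one_pos (KPC_ge_one hp hC)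

include hC in
lemma KC_pos : 0 < KC C p := Real.rpow_pos_of_pos (KPC_pos hp hC) _

include hC in
lemma KC_pow : KC C p ^ p = KPC C p := by
  rw [KC, ← Real.rpow_mul (KPC_pos hp hC).le]
  rw [one_div, inv_mul_cancel₀ hp.ne', Real.rpow_one]

-- the key smallness facts about the sector width `2π/J`.
include hC in
lemma JC_facts :
    mC C p * (2 * (2 * Real.pi / (JC C p : ℝ))) ^ p * gC C p ≤ 1/2 ∧
      2 * Real.pi / (JC C p : ℝ) ≤ 1 ∧ 0 < (JC C p : ℝ) := by
  have hπ3 := Real.pi_gt_three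
  set W : ℝ := 2 * mC C p * gC C p with hW
  have hmC := mC_pos hp hC
  have hgC := gC_pos hp hC
  have hWpos : 0 < W := by rw [hW]; positivity
  have hW1 : (1:ℝ) ≤ W ^ (1/p) := by
    have hW8 : (1:ℝ) ≤ W := by
      have h1 := mC_ge_four hp hC
      have h2 := gC_ge_one hp hC
      rw [hW]; nlinarith
    have := Real.rpow_le_rpow (zero_le_one) hW8 (by positivity : (0:ℝ) ≤ 1/p)
    rwa [Real.one_rpow] at this
  have hWp : 0 < W ^ (1/p) := Real.rpow_pos_of_pos hWpos _
  have hJge : 4 * Real.pi * W ^ (1/p) ≤ (JC C p : ℝ) := by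
    have h1 : (4 * Real.pi * W ^ (1/p)) ≤ (⌈4 * Real.pi * W ^ (1/p)⌉₊ : ℝ) := Nat.le_ceil _
    have h2 : ((JC C p : ℕ) : ℝ) = (⌈4 * Real.pi * W ^ (1/p)⌉₊ : ℝ) + 1 := by
      rw [hW]; simp [JC]
    rw [h2]; linarith
  have hJpos : (0:ℝ) < (JC C p : ℝ) := by
    have : (0:ℝ) < 4 * Real.pi * W ^ (1/p) := by positivity
    linarith
  have hJbig : 4 * Real.pi ≤ (JC C p : ℝ) := by nlinarith
  refine ⟨?_, ?_, hJpos⟩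
  · have hstep : 2 * (2 * Real.pi / (JC C p:ℝ)) ≤ (W ^ (1/p))⁻¹ := by
      rw [show 2 * (2*Real.pi/(JC C p:ℝ)) = 4*Real.pi/(JC C p:ℝ) by ring]
      rw [div_le_iff₀ hJpos]
      have h3 := mul_le_mul_of_nonneg_left hJge (inv_nonneg.mpr hWp.le)
      have heq : (W^(1/p))⁻¹ * (4*Real.pi*W^(1/p)) = 4*Real.pi := by field_simp
      linarith
    have hWpow : (W ^ (1/p)) ^ p = W := by
      rw [← Real.rpow_mul hWpos.le, one_div, inv_mul_cancel₀ hp.ne', Real.rpow_one]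
    have hppow : (2 * (2 * Real.pi / (JC C p : ℝ))) ^ p ≤ W⁻¹ := by
      have h0 : (0:ℝ) ≤ 2 * (2 * Real.pi / (JC C p : ℝ)) := by positivity
      calc (2 * (2 * Real.pi / (JC C p : ℝ))) ^ p
          ≤ ((W ^ (1/p))⁻¹) ^ p := Real.rpow_le_rpow h0 hstep hp.le
        _ = ((W ^ (1/p)) ^ p)⁻¹ := Real.inv_rpow hWp.le p
        _ = W⁻¹ := by rw [hWpow]
    have heq2 : mC C p * W⁻¹ * gC C p = 1/2 := by
      rw [hW]; field_simp
    calc mC C p * (2 * (2 * Real.pi / (JC C p : ℝ))) ^ p * gC C p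
        ≤ mC C p * W⁻¹ * gC C p := by
          apply mul_le_mul_of_nonneg_right _ hgC.le
          exact mul_le_mul_of_nonneg_left hppow hmC.le
      _ = 1/2 := heq2
  · rw [div_le_one hJpos]; linarith

end NumFacts

/-! ### Basic norm and coordinate lemmas -/

variable (bs : PBasis ℂ X p)

lemma N0 : bs.N 0 = 0 := (bs.N_eq_zero_iff 0).mpr rfl

lemma Nsmul1 {z : ℂ} (hz : ‖z‖ = 1) (f : X) : bs.N (z • f) = bs.N f := by
  rw [bs.N_smul, hz, one_mul]

lemma Nneg (f : X) : bs.N (-f) = bs.N f := by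
  have h : (-1 : ℂ) • f = -f := by simp
  rw [← h, bs.N_smul]
  norm_num

lemma Nsub_pow (hp : 0 < p) (f g : X) : bs.N (f - g) ^ p ≤ bs.N f ^ p + bs.N g ^ p := by
  rw [sub_eq_add_neg]
  have := bs.N_padd f (-g)
  rwa [Nneg] at this

lemma Nsum (hp : 0 < p) {ι : Type*} (T : Finset ι) (v : ι → X) :
    bs.N (∑ i ∈ T, v i) ^ p ≤ ∑ i ∈ T, bs.N (v i) ^ p := by
  classical
  induction T using Finset.cons_induction with
  | empty => simp [N0, Real.zero_rpow hp.ne']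
  | cons a T ha ih =>
    rw [Finset.sum_cons, Finset.sum_cons]
    exact le_trans (bs.N_padd _ _) (by linarith)

lemma rpow_le_iff (hp : 0 < p) {a b : ℝ} (ha : 0 ≤ a) (hb : 0 ≤ b) :
    a ≤ b ↔ a ^ p ≤ b ^ p := by
  constructor
  · intro h; exact Real.rpow_le_rpow ha h hp.le
  · intro h; by_contra hlt; push_neg at hlt
    exact absurd h (not_le.mpr (Real.rpow_lt_rpow hb hlt hp))

lemma le_of_forall_eps (hp : 0 < p) {a b c : ℝ} (hc : 0 ≤ c)
    (H : ∀ ε : ℝ, 0 < ε → a ≤ b + ε ^ p * c) : a ≤ b := by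
  by_contra hab
  push_neg at hab
  rcases eq_or_lt_of_le hc with hc0 | hc0
  · have := H 1 one_pos
    rw [← hc0, mul_zero, add_zero] at this
    exact absurd this (not_le.mpr hab)
  · set ε₀ : ℝ := (a - b) / 2 with hε₀
    have hε₀pos : 0 < ε₀ := by rw [hε₀]; linarith
    set ε : ℝ := (ε₀ / c) ^ (1/p) with hε
    have hεpos : 0 < ε := Real.rpow_pos_of_pos (div_pos hε₀pos hc0) _
    have hεp : ε ^ p = ε₀ / c := by
      rw [hε, ← Real.rpow_mul (div_pos hε₀pos hc0).le, one_div,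
        inv_mul_cancel₀ hp.ne', Real.rpow_one]
    have := H ε hεpos
    rw [hεp, div_mul_cancel₀ _ hc0.ne'] at this
    rw [hε₀] at this
    linarith

lemma coord_sum (S : Finset ℕ) (a : ℕ → ℂ) (m : ℕ) :
    bs.coord m (∑ n ∈ S, a n • bs.e n) = if m ∈ S then a m else 0 := by
  rw [map_sum]
  have h : ∀ n ∈ S, bs.coord m (a n • bs.e n) = if m = n then a n else 0 := by
    intro n _
    rw [map_smul, bs.biorth m n, smul_eq_mul]
    split <;> simp
  rw [Finset.sum_congr rfl h, Finset.sum_ite_eq]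

lemma vec_mem (S : Finset ℕ) (a : ℕ → ℂ) :
    (∑ n ∈ S, a n • bs.e n) ∈ Submodule.span ℂ (Set.range bs.e) :=
  Submodule.sum_mem _ fun n _ => Submodule.smul_mem _ _ (Submodule.subset_span ⟨n, rfl⟩)

lemma exists_rep {f : X} (hf : f ∈ Submodule.span ℂ (Set.range bs.e)) :
    ∃ F : Finset ℕ, (f = ∑ n ∈ F, bs.coord n f • bs.e n) ∧ ∀ n ∉ F, bs.coord n f = 0 := by
  rw [Finsupp.mem_span_range_iff_exists_finsupp] at hf
  obtain ⟨c, hc⟩ := hf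
  have hsum : f = ∑ n ∈ c.support, c n • bs.e n := by
    rw [← hc, Finsupp.sum]
  have hco : ∀ m, bs.coord m f = if m ∈ c.support then c m else 0 := fun m => by
    rw [hsum, coord_sum]
  refine ⟨c.support, ?_, fun n hn => by rw [hco n, if_neg hn]⟩
  conv_lhs => rw [hsum]
  exact Finset.sum_congr rfl fun n hn => by rw [hco n, if_pos hn]

lemma proj_eq (A : Finset ℕ) (f : X) : bs.proj A f = ∑ n ∈ A, bs.coord n f • bs.e n := rfl

lemma proj_coord (A : Finset ℕ) (f : X) (m : ℕ) :
    bs.coord m (bs.proj A f) = if m ∈ A then bs.coord m f else 0 := by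
  rw [proj_eq, coord_sum]

lemma proj_add (A : Finset ℕ) (x y : X) :
    bs.proj A (x + y) = bs.proj A x + bs.proj A y := by
  simp only [proj_eq, map_add, add_smul, Finset.sum_add_distrib]

lemma proj_mem (A : Finset ℕ) (f : X) :
    bs.proj A f ∈ Submodule.span ℂ (Set.range bs.e) := vec_mem bs A _

/-! ### Step P1 : removal of an "aligned" disjointly supported part -/

lemma removal (hG : Good bs C) {u : X} (hu : u ∈ Submodule.span ℂ (Set.range bs.e))
    (S : Finset ℕ) (ρ : ℕ → ℝ) (hρ : ∀ n ∈ S, 0 ≤ ρ n) (ω : ℂ) (hω : ‖ω‖ = 1)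
    (hdis : ∀ n ∈ S, bs.coord n u = 0) :
    bs.N u ≤ C * bs.N (u + ∑ n ∈ S, ((ρ n : ℂ) * ω) • bs.e n) := by
  classical
  have hω0 : ω ≠ 0 := by
    intro h; rw [h] at hω; simp at hω
  have hωinv : ‖ω⁻¹‖ = 1 := by rw [norm_inv, hω]; norm_num
  set v : X := ∑ n ∈ S, ((ρ n : ℂ) * ω) • bs.e n with hv
  set g : X := ∑ n ∈ S, ((ρ n : ℝ) : ℂ) • bs.e n with hg
  have hcoordg : ∀ m, bs.coord m g = if m ∈ S then ((ρ m : ℝ) : ℂ) else 0 := fun m => by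
    rw [hg, coord_sum]
  have h1 : bs.N (ω⁻¹ • u) ≤ C * bs.N (ω⁻¹ • u + g) := by
    apply hG
    · exact Submodule.smul_mem _ _ hu
    · exact vec_mem bs S _
    · intro n
      rw [hcoordg n]
      split
      · exact ⟨Complex.ofReal_im _, by rw [Complex.ofReal_re]; exact hρ n ‹_›⟩
      · simp
    · rw [Set.disjoint_left]
      intro n hn hng
      simp only [PBasis.supp, Set.mem_setOf_eq] at hn hng
      by_cases hnS : n ∈ S
      · exact hn (by rw [map_smul, hdis n hnS, smul_zero])
      · exact hng (by rw [hcoordg n, if_neg hnS])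
  have h2 : ω⁻¹ • u + g = ω⁻¹ • (u + v) := by
    rw [smul_add, hv, Finset.smul_sum]
    congr 1
    refine Finset.sum_congr rfl fun n hn => ?_
    rw [smul_smul]
    congr 1
    rw [mul_comm ((ρ n : ℂ)) ω, ← mul_assoc, inv_mul_cancel₀ hω0, one_mul]
  rw [h2, Nsmul1 bs hωinv, Nsmul1 bs hωinv] at h1
  exact h1

/-! ### Step P2 : projections of aligned vectors -/

lemma aligned_proj (hp : 0 < p) (hC : 0 < C) (hG : Good bs C)
    {S T : Finset ℕ} (hTS : T ⊆ S) (ρ : ℕ → ℝ) (hρ : ∀ n ∈ S, 0 ≤ ρ n)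
    (ω : ℂ) (hω : ‖ω‖ = 1) :
    bs.N (∑ n ∈ T, ((ρ n : ℂ) * ω) • bs.e n) ^ p
      ≤ gC C p * bs.N (∑ n ∈ S, ((ρ n : ℂ) * ω) • bs.e n) ^ p := by
  classical
  set u : X := ∑ n ∈ S \ T, ((ρ n : ℂ) * ω) • bs.e n with hu
  have hsum : u + ∑ n ∈ T, ((ρ n : ℂ) * ω) • bs.e n
      = ∑ n ∈ S, ((ρ n : ℂ) * ω) • bs.e n := by
    rw [hu]; exact Finset.sum_sdiff hTS
  have h1 : bs.N u ≤ C * bs.N (∑ n ∈ S, ((ρ n : ℂ) * ω) • bs.e n) := by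
    have hco : ∀ n ∈ T, bs.coord n u = 0 := by
      intro n hn
      rw [hu, coord_sum, if_neg (by simp [Finset.mem_sdiff, hn])]
    have := removal bs hG (vec_mem bs _ _) T ρ (fun n hn => hρ n (hTS hn)) ω hω hco
    rwa [hsum] at this
  have h2 : ∑ n ∈ T, ((ρ n : ℂ) * ω) • bs.e n
      = (∑ n ∈ S, ((ρ n : ℂ) * ω) • bs.e n) - u := by
    rw [← hsum]; abel
  rw [h2]
  have h3 := Nsub_pow bs hp (∑ n ∈ S, ((ρ n : ℂ) * ω) • bs.e n) u
  have h4 : bs.N u ^ p ≤ C ^ p * bs.N (∑ n ∈ S, ((ρ n : ℂ) * ω) • bs.e n) ^ p := by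
    have := Real.rpow_le_rpow (bs.N_nonneg u) h1 hp.le
    rwa [Real.mul_rpow hC.le (bs.N_nonneg _)] at this
  rw [gC]
  nlinarith [Real.rpow_nonneg (bs.N_nonneg (∑ n ∈ S, ((ρ n : ℂ) * ω) • bs.e n)) p]

lemma aligned_proj1 (hp : 0 < p) (hC : 0 < C) (hG : Good bs C)
    {S T : Finset ℕ} (hTS : T ⊆ S) (ρ : ℕ → ℝ) (hρ : ∀ n ∈ S, 0 ≤ ρ n) :
    bs.N (∑ n ∈ T, ((ρ n : ℝ) : ℂ) • bs.e n) ^ p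
      ≤ gC C p * bs.N (∑ n ∈ S, ((ρ n : ℝ) : ℂ) • bs.e n) ^ p := by
  have := aligned_proj bs hp hC hG hTS ρ hρ 1 (by norm_num)
  simpa using this

/-! ### Step P3 : bounded multipliers on aligned vectors -/

lemma bin_aux (hp : 0 < p) (hC : 0 < C) (hG : Good bs C)
    (S : Finset ℕ) (ρ : ℕ → ℝ) (hρ : ∀ n ∈ S, 0 ≤ ρ n) :
    ∀ (K : ℕ) (t : ℕ → ℝ), (∀ n ∈ S, 0 ≤ t n) → (∀ n ∈ S, t n ≤ 1) →
      bs.N (∑ n ∈ S, ((t n * ρ n : ℝ) : ℂ) • bs.e n) ^ p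
        ≤ (∑ k ∈ Finset.range K, ((1/2:ℝ)^p)^k)
            * (gC C p * bs.N (∑ n ∈ S, ((ρ n : ℝ) : ℂ) • bs.e n) ^ p)
          + ((1/2:ℝ)^p)^K * (∑ n ∈ S, ρ n ^ p * bs.N (bs.e n) ^ p) := by
  classical
  intro K
  induction K with
  | zero =>
    intro t ht0 ht1
    simp only [Finset.range_zero, Finset.sum_empty, zero_mul, pow_zero, one_mul, zero_add]
    calc bs.N (∑ n ∈ S, ((t n * ρ n : ℝ) : ℂ) • bs.e n) ^ p
        ≤ ∑ n ∈ S, bs.N (((t n * ρ n : ℝ) : ℂ) • bs.e n) ^ p := Nsum bs hp S _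
      _ ≤ ∑ n ∈ S, ρ n ^ p * bs.N (bs.e n) ^ p := by
          apply Finset.sum_le_sum
          intro n hn
          rw [bs.N_smul]
          have hnorm : ‖((t n * ρ n : ℝ) : ℂ)‖ = t n * ρ n := by
            rw [Complex.norm_real, Real.norm_eq_abs, abs_of_nonneg
              (mul_nonneg (ht0 n hn) (hρ n hn))]
          rw [hnorm, Real.mul_rpow (mul_nonneg (ht0 n hn) (hρ n hn)) (bs.N_nonneg _)]
          apply mul_le_mul_of_nonneg_right _ (Real.rpow_nonneg (bs.N_nonneg _) p)
          apply Real.rpow_le_rpow (mul_nonneg (ht0 n hn) (hρ n hn)) _ hp.le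
          exact mul_le_of_le_one_left (hρ n hn) (ht1 n hn)
  | succ K ih =>
    intro t ht0 ht1
    set σ : ℕ → ℝ := fun n => if 1/2 ≤ t n then 1 else 0 with hσ
    set s : ℕ → ℝ := fun n => 2 * t n - σ n with hs
    have hs0 : ∀ n ∈ S, 0 ≤ s n := by
      intro n hn
      simp only [hs, hσ]
      split <;> [skip; skip] <;> rename_i h <;>
        [linarith; (push_neg at h; linarith [ht0 n hn])]
    have hs1 : ∀ n ∈ S, s n ≤ 1 := by
      intro n hn
      simp only [hs, hσ]
      split <;> rename_i h <;> [linarith [ht1 n hn]; (push_neg at h; linarith)]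
    have hvec : (∑ n ∈ S, ((t n * ρ n : ℝ) : ℂ) • bs.e n)
        = ((2:ℂ)⁻¹) • ((∑ n ∈ S, ((σ n * ρ n : ℝ) : ℂ) • bs.e n)
            + ∑ n ∈ S, ((s n * ρ n : ℝ) : ℂ) • bs.e n) := by
      rw [smul_add, Finset.smul_sum, Finset.smul_sum, ← Finset.sum_add_distrib]
      refine Finset.sum_congr rfl fun n hn => ?_
      rw [smul_smul, smul_smul, ← add_smul]
      congr 1
      simp only [hs]
      push_cast
      ring
    have hhalf : ‖(2:ℂ)⁻¹‖ = 1/2 := by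
      rw [norm_inv]
      norm_num
    rw [hvec, bs.N_smul, hhalf,
      Real.mul_rpow (by norm_num) (bs.N_nonneg _)]
    -- bound the sigma part
    have hσpart : bs.N (∑ n ∈ S, ((σ n * ρ n : ℝ) : ℂ) • bs.e n) ^ p
        ≤ gC C p * bs.N (∑ n ∈ S, ((ρ n : ℝ) : ℂ) • bs.e n) ^ p := by
      have hset : (∑ n ∈ S, ((σ n * ρ n : ℝ) : ℂ) • bs.e n)
          = ∑ n ∈ S.filter (fun n => 1/2 ≤ t n), ((ρ n : ℝ) : ℂ) • bs.e n := by
        rw [Finset.sum_filter]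
        refine Finset.sum_congr rfl fun n hn => ?_
        simp only [hσ]
        split <;> rename_i h
        · norm_num
        · norm_num
      rw [hset]
      exact aligned_proj1 bs hp hC hG (Finset.filter_subset _ _) ρ hρ
    have hspart := ih s hs0 hs1
    have hpadd := bs.N_padd (∑ n ∈ S, ((σ n * ρ n : ℝ) : ℂ) • bs.e n)
      (∑ n ∈ S, ((s n * ρ n : ℝ) : ℂ) • bs.e n)
    set r : ℝ := (1/2:ℝ)^p with hr
    have hr0 : 0 ≤ r := r_nonneg hp
    have hr1 : r < 1 := r_lt_one hp
    set A : ℝ := gC C p * bs.N (∑ n ∈ S, ((ρ n : ℝ) : ℂ) • bs.e n) ^ p with hA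
    have hA0 : 0 ≤ A := by
      rw [hA]
      exact mul_nonneg (by have := gC_pos hp hC; linarith)
        (Real.rpow_nonneg (bs.N_nonneg _) p)
    set Z : ℝ := ∑ n ∈ S, ρ n ^ p * bs.N (bs.e n) ^ p with hZ
    have hZ0 : 0 ≤ Z := by
      rw [hZ]
      exact Finset.sum_nonneg fun n hn =>
        mul_nonneg (Real.rpow_nonneg (hρ n hn) p) (Real.rpow_nonneg (bs.N_nonneg _) p)
    have hgeom : ∑ k ∈ Finset.range (K+1), r^k = (r * ∑ k ∈ Finset.range K, r^k) + 1 :=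
      geom_sum_succ
    have hgs0 : 0 ≤ ∑ k ∈ Finset.range K, r^k :=
      Finset.sum_nonneg fun k _ => pow_nonneg hr0 k
    calc r * bs.N ((∑ n ∈ S, ((σ n * ρ n : ℝ) : ℂ) • bs.e n)
            + ∑ n ∈ S, ((s n * ρ n : ℝ) : ℂ) • bs.e n) ^ p
        ≤ r * (bs.N (∑ n ∈ S, ((σ n * ρ n : ℝ) : ℂ) • bs.e n) ^ p
            + bs.N (∑ n ∈ S, ((s n * ρ n : ℝ) : ℂ) • bs.e n) ^ p) :=
          mul_le_mul_of_nonneg_left hpadd hr0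
      _ ≤ r * (A + ((∑ k ∈ Finset.range K, r^k) * A + r^K * Z)) := by
          apply mul_le_mul_of_nonneg_left _ hr0
          exact add_le_add hσpart hspart
      _ = (r + r * ∑ k ∈ Finset.range K, r^k) * A + r^(K+1) * Z := by ring
      _ ≤ (∑ k ∈ Finset.range (K+1), r^k) * A + r^(K+1) * Z := by
          apply add_le_add_left
          apply mul_le_mul_of_nonneg_right _ hA0
          rw [hgeom]
          linarith

lemma bin_mult (hp : 0 < p) (hC : 0 < C) (hG : Good bs C)
    (S : Finset ℕ) (ρ : ℕ → ℝ) (hρ : ∀ n ∈ S, 0 ≤ ρ n)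
    (t : ℕ → ℝ) (ht0 : ∀ n ∈ S, 0 ≤ t n) (ht1 : ∀ n ∈ S, t n ≤ 1) :
    bs.N (∑ n ∈ S, ((t n * ρ n : ℝ) : ℂ) • bs.e n) ^ p
      ≤ tC C p * bs.N (∑ n ∈ S, ((ρ n : ℝ) : ℂ) • bs.e n) ^ p := by
  classical
  set r : ℝ := (1/2:ℝ)^p with hr
  have hr0 : 0 ≤ r := r_nonneg hp
  have hr1 : r < 1 := r_lt_one hp
  have h1r : 0 < 1 - r := by linarith
  set A : ℝ := gC C p * bs.N (∑ n ∈ S, ((ρ n : ℝ) : ℂ) • bs.e n) ^ p with hA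
  have hA0 : 0 ≤ A := by
    rw [hA]
    exact mul_nonneg (by have := gC_pos hp hC; linarith)
      (Real.rpow_nonneg (bs.N_nonneg _) p)
  set Z : ℝ := ∑ n ∈ S, ρ n ^ p * bs.N (bs.e n) ^ p with hZ
  have hb : ∀ K : ℕ, bs.N (∑ n ∈ S, ((t n * ρ n : ℝ) : ℂ) • bs.e n) ^ p
      ≤ (1/(1-r)) * A + r^K * Z := by
    intro K
    refine le_trans (bin_aux bs hp hC hG S ρ hρ K t ht0 ht1) ?_
    apply add_le_add_left
    apply mul_le_mul_of_nonneg_right _ hA0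
    rw [le_div_iff₀ h1r]
    nlinarith [geom_sum_mul r K, pow_nonneg hr0 K]
  have hlim : Filter.Tendsto (fun K : ℕ => (1/(1-r)) * A + r^K * Z)
      Filter.atTop (nhds ((1/(1-r)) * A + 0)) := by
    apply Filter.Tendsto.add tendsto_const_nhds
    simpa using (tendsto_pow_atTop_nhds_zero_of_lt_one hr0 hr1).mul_const Z
  have := ge_of_tendsto' hlim hb
  rw [add_zero] at this
  refine le_trans this (le_of_eq ?_)
  rw [hA, tC]
  ring

lemma real_mult (hp : 0 < p) (hC : 0 < C) (hG : Good bs C)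
    (S : Finset ℕ) (ρ : ℕ → ℝ) (hρ : ∀ n ∈ S, 0 ≤ ρ n)
    (a : ℕ → ℝ) (ha : ∀ n ∈ S, |a n| ≤ ρ n) :
    bs.N (∑ n ∈ S, ((a n : ℝ) : ℂ) • bs.e n) ^ p
      ≤ 2 * tC C p * bs.N (∑ n ∈ S, ((ρ n : ℝ) : ℂ) • bs.e n) ^ p := by
  classical
  set t1 : ℕ → ℝ := fun n => if ρ n = 0 then 0 else max (a n) 0 / ρ n with ht1def
  set t2 : ℕ → ℝ := fun n => if ρ n = 0 then 0 else max (-a n) 0 / ρ n with ht2def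
  have ha0 : ∀ n ∈ S, ρ n = 0 → a n = 0 := by
    intro n hn h0
    have := ha n hn
    rw [h0] at this
    exact abs_eq_zero.mp (le_antisymm this (abs_nonneg _))
  have key : ∀ n ∈ S, a n = t1 n * ρ n - t2 n * ρ n := by
    intro n hn
    by_cases h0 : ρ n = 0
    · simp [ht1def, ht2def, h0, ha0 n hn h0]
    · have hρpos : 0 < ρ n := lt_of_le_of_ne (hρ n hn) (Ne.symm h0)
      simp only [ht1def, ht2def, if_neg h0]
      rw [div_mul_cancel₀ _ h0, div_mul_cancel₀ _ h0]
      rcases le_total 0 (a n) with h | h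
      · rw [max_eq_left h, max_eq_right (by linarith)]; ring
      · rw [max_eq_right h, max_eq_left (by linarith)]; ring
  have ht10 : ∀ n ∈ S, 0 ≤ t1 n := by
    intro n hn
    simp only [ht1def]
    split
    · exact le_refl 0
    · rename_i h0
      have hρpos : 0 < ρ n := lt_of_le_of_ne (hρ n hn) (Ne.symm h0)
      positivity
  have ht20 : ∀ n ∈ S, 0 ≤ t2 n := by
    intro n hn
    simp only [ht2def]
    split
    · exact le_refl 0
    · rename_i h0
      have hρpos : 0 < ρ n := lt_of_le_of_ne (hρ n hn) (Ne.symm h0)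
      positivity
  have ht11 : ∀ n ∈ S, t1 n ≤ 1 := by
    intro n hn
    simp only [ht1def]
    split
    · norm_num
    · rename_i h0
      have hρpos : 0 < ρ n := lt_of_le_of_ne (hρ n hn) (Ne.symm h0)
      rw [div_le_one hρpos, max_le_iff]
      exact ⟨le_trans (le_abs_self _) (ha n hn), hρ n hn⟩
  have ht21 : ∀ n ∈ S, t2 n ≤ 1 := by
    intro n hn
    simp only [ht2def]
    split
    · norm_num
    · rename_i h0
      have hρpos : 0 < ρ n := lt_of_le_of_ne (hρ n hn) (Ne.symm h0)
      rw [div_le_one hρpos, max_le_iff]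
      exact ⟨le_trans (neg_le_abs _) (ha n hn), hρ n hn⟩
  have hvec : (∑ n ∈ S, ((a n : ℝ) : ℂ) • bs.e n)
      = (∑ n ∈ S, ((t1 n * ρ n : ℝ) : ℂ) • bs.e n)
        - ∑ n ∈ S, ((t2 n * ρ n : ℝ) : ℂ) • bs.e n := by
    rw [← Finset.sum_sub_distrib]
    refine Finset.sum_congr rfl fun n hn => ?_
    rw [← sub_smul]
    congr 1
    rw [← Complex.ofReal_sub]
    congr 1
    rw [key n hn]
  rw [hvec]
  have h1 := bin_mult bs hp hC hG S ρ hρ t1 ht10 ht11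
  have h2 := bin_mult bs hp hC hG S ρ hρ t2 ht20 ht21
  have h3 := Nsub_pow bs hp (∑ n ∈ S, ((t1 n * ρ n : ℝ) : ℂ) • bs.e n)
    (∑ n ∈ S, ((t2 n * ρ n : ℝ) : ℂ) • bs.e n)
  linarith

lemma cx_mult (hp : 0 < p) (hC : 0 < C) (hG : Good bs C)
    (S : Finset ℕ) (ρ : ℕ → ℝ) (hρ : ∀ n ∈ S, 0 ≤ ρ n)
    (m : ℕ → ℂ) (hm : ∀ n ∈ S, ‖m n‖ ≤ ρ n) :
    bs.N (∑ n ∈ S, m n • bs.e n) ^ p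
      ≤ mC C p * bs.N (∑ n ∈ S, ((ρ n : ℝ) : ℂ) • bs.e n) ^ p := by
  classical
  have hvec : (∑ n ∈ S, m n • bs.e n)
      = (∑ n ∈ S, (((m n).re : ℝ) : ℂ) • bs.e n)
        + Complex.I • ∑ n ∈ S, (((m n).im : ℝ) : ℂ) • bs.e n := by
    rw [Finset.smul_sum, ← Finset.sum_add_distrib]
    refine Finset.sum_congr rfl fun n hn => ?_
    rw [smul_smul, ← add_smul]
    congr 1
    rw [mul_comm]
    exact (Complex.re_add_im (m n)).symm
  have hre : ∀ n ∈ S, |(m n).re| ≤ ρ n := fun n hn =>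
    le_trans (Complex.abs_re_le_norm (m n)) (le_trans le_rfl (hm n hn))
  have him : ∀ n ∈ S, |(m n).im| ≤ ρ n := fun n hn =>
    le_trans (Complex.abs_im_le_norm (m n)) (le_trans le_rfl (hm n hn))
  have h1 := real_mult bs hp hC hG S ρ hρ (fun n => (m n).re) hre
  have h2 := real_mult bs hp hC hG S ρ hρ (fun n => (m n).im) him
  have h3 := bs.N_padd (∑ n ∈ S, (((m n).re : ℝ) : ℂ) • bs.e n)
    (Complex.I • ∑ n ∈ S, (((m n).im : ℝ) : ℂ) • bs.e n)
  rw [hvec]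
  have hI : bs.N (Complex.I • ∑ n ∈ S, (((m n).im : ℝ) : ℂ) • bs.e n)
      = bs.N (∑ n ∈ S, (((m n).im : ℝ) : ℂ) • bs.e n) := Nsmul1 bs (by simp) _
  rw [hI] at h3
  rw [mC]
  linarith

/-! ### Step P5 : narrow sector slices of a vector are uniformly bounded -/

set_option maxHeartbeats 1000000 in
lemma sector (hp : 0 < p) (hC : 0 < C) (hG : Good bs C)
    (F S : Finset ℕ) (hSF : S ⊆ F) (h : X)
    (hrep : h = ∑ n ∈ F, bs.coord n h • bs.e n)
    (ω : ℂ) (hω : ‖ω‖ = 1) (lam : ℕ → ℂ)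
    (hlam : ∀ n ∈ S, bs.coord n h = ((‖bs.coord n h‖) : ℂ) * ω * lam n)
    (δ : ℝ) (hδ0 : 0 ≤ δ) (hlam1 : ∀ n ∈ S, ‖lam n - 1‖ ≤ δ)
    (hsmall : mC C p * δ ^ p * gC C p ≤ 1/2) :
    bs.N (∑ n ∈ S, bs.coord n h • bs.e n) ^ p ≤ 4 * gC C p * bs.N h ^ p := by
  classical
  have habs : ∀ n : ℕ, (0:ℝ) ≤ ‖bs.coord n h‖ := fun n => norm_nonneg _
  set V : X := ∑ n ∈ S, (((‖bs.coord n h‖ : ℝ) : ℂ) * ω) • bs.e n with hV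
  set E : X := ∑ n ∈ S,
    (bs.coord n h - ((‖bs.coord n h‖ : ℝ) : ℂ) * ω) • bs.e n with hE
  set u : X := ∑ n ∈ F \ S, bs.coord n h • bs.e n with hu
  set R : X := ∑ n ∈ S, ((‖bs.coord n h‖ : ℝ) : ℂ) • bs.e n with hR
  have hVR : bs.N V = bs.N R := by
    have hVsmul : V = ω • R := by
      rw [hV, hR, Finset.smul_sum]
      refine Finset.sum_congr rfl fun n hn => ?_
      rw [smul_smul, mul_comm]
    rw [hVsmul, Nsmul1 bs hω]
  have hmC := mC_pos hp hC
  have hq0 : 0 ≤ mC C p * δ ^ p := mul_nonneg hmC.le (Real.rpow_nonneg hδ0 p)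
  have hgC1 : 1 ≤ gC C p := gC_ge_one hp hC
  -- bound on E
  have hEb : bs.N E ^ p ≤ (mC C p * δ ^ p) * bs.N V ^ p := by
    have h1 : ∀ n ∈ S, ‖bs.coord n h - ((‖bs.coord n h‖ : ℝ) : ℂ) * ω‖
        ≤ δ * ‖bs.coord n h‖ := by
      intro n hn
      have heq : bs.coord n h - ((‖bs.coord n h‖ : ℝ) : ℂ) * ω
          = ((‖bs.coord n h‖ : ℝ) : ℂ) * ω * (lam n - 1) := by
        rw [mul_sub, mul_one, ← hlam n hn]
      rw [heq, norm_mul, norm_mul, hω, Complex.norm_real, Real.norm_eq_abs,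
        abs_of_nonneg (habs n), mul_one, mul_comm]
      exact mul_le_mul_of_nonneg_right (hlam1 n hn) (habs n)
    have h2 : bs.N E ^ p ≤ mC C p *
        bs.N (∑ n ∈ S, ((δ * ‖bs.coord n h‖ : ℝ) : ℂ) • bs.e n) ^ p :=
      cx_mult bs hp hC hG S (fun n => δ * ‖bs.coord n h‖)
        (fun n hn => mul_nonneg hδ0 (habs n))
        (fun n => bs.coord n h - ((‖bs.coord n h‖ : ℝ) : ℂ) * ω) h1
    have h3 : (∑ n ∈ S, ((δ * ‖bs.coord n h‖ : ℝ) : ℂ) • bs.e n)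
        = ((δ : ℝ) : ℂ) • R := by
      rw [hR, Finset.smul_sum]
      refine Finset.sum_congr rfl fun n hn => ?_
      rw [smul_smul, ← Complex.ofReal_mul]
    rw [h3] at h2
    have h4 : bs.N (((δ : ℝ) : ℂ) • R) = δ * bs.N R := by
      rw [bs.N_smul, Complex.norm_real, Real.norm_eq_abs, abs_of_nonneg hδ0]
    rw [h4, Real.mul_rpow hδ0 (bs.N_nonneg _)] at h2
    rw [hVR]
    calc bs.N E ^ p ≤ mC C p * (δ ^ p * bs.N R ^ p) := h2
      _ = mC C p * δ ^ p * bs.N R ^ p := by ring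
  -- u has zero coordinates on S
  have hucoord : ∀ n ∈ S, bs.coord n u = 0 := by
    intro n hn
    rw [hu, coord_sum, if_neg (by simp [hn])]
  have hrem : bs.N u ≤ C * bs.N (u + V) :=
    removal bs hG (vec_mem bs _ _) S (fun n => ‖bs.coord n h‖)
      (fun n _ => habs n) ω hω hucoord
  have hdec : h = u + ∑ n ∈ S, bs.coord n h • bs.e n := by
    rw [hu]
    conv_lhs => rw [hrep]
    exact (Finset.sum_sdiff hSF).symm
  have hVE : (∑ n ∈ S, bs.coord n h • bs.e n) = V + E := by
    rw [hV, hE, ← Finset.sum_add_distrib]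
    refine Finset.sum_congr rfl fun n hn => ?_
    rw [← add_smul]
    congr 1
    ring
  have hh' : h = (u + V) + E := by rw [hdec, hVE]; abel
  have h5 : bs.N (u + V) ^ p ≤ bs.N h ^ p + bs.N E ^ p := by
    have huV : u + V = h - E := by rw [hh']; abel
    rw [huV]
    exact Nsub_pow bs hp h E
  have h6 : bs.N V ^ p ≤ bs.N (u + V) ^ p + bs.N u ^ p := by
    have := Nsub_pow bs hp (u + V) u
    rwa [add_sub_cancel_left] at this
  have hCp0 : 0 ≤ C ^ p := Real.rpow_nonneg hC.le p
  have h7 : bs.N u ^ p ≤ C ^ p * bs.N (u + V) ^ p := by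
    have := Real.rpow_le_rpow (bs.N_nonneg u) hrem hp.le
    rwa [Real.mul_rpow hC.le (bs.N_nonneg _)] at this
  have e0 : C ^ p * bs.N (u + V) ^ p ≤ C ^ p * (bs.N h ^ p + bs.N E ^ p) :=
    mul_le_mul_of_nonneg_left h5 hCp0
  have e1 : bs.N V ^ p ≤ gC C p * (bs.N h ^ p + bs.N E ^ p) := by
    rw [gC]
    nlinarith
  have e2 : gC C p * bs.N E ^ p ≤ gC C p * ((mC C p * δ ^ p) * bs.N V ^ p) :=
    mul_le_mul_of_nonneg_left hEb (by linarith)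
  have e3 : gC C p * ((mC C p * δ ^ p) * bs.N V ^ p) ≤ (1/2) * bs.N V ^ p := by
    have := mul_le_mul_of_nonneg_right hsmall (Real.rpow_nonneg (bs.N_nonneg V) p)
    calc gC C p * ((mC C p * δ ^ p) * bs.N V ^ p)
        = (mC C p * δ ^ p * gC C p) * bs.N V ^ p := by ring
      _ ≤ (1/2) * bs.N V ^ p := this
  have habs2 : bs.N V ^ p ≤ 2 * gC C p * bs.N h ^ p := by nlinarith
  have hq12 : mC C p * δ ^ p ≤ 1/2 := by nlinarith
  have hfin : bs.N (V + E) ^ p ≤ bs.N V ^ p + bs.N E ^ p := bs.N_padd V E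
  have hgh0 : 0 ≤ gC C p * bs.N h ^ p :=
    mul_nonneg (by linarith) (Real.rpow_nonneg (bs.N_nonneg h) p)
  rw [hVE]
  nlinarith [Real.rpow_nonneg (bs.N_nonneg V) p]

/-! ### angular decomposition helpers -/

def aval (z : ℂ) : ℝ := Complex.arg z + (if Complex.arg z < 0 then 2 * Real.pi else 0)

def jdxF (z : ℂ) (Δ : ℝ) : ℕ := ⌊aval z / Δ⌋₊

lemma aval_nonneg (z : ℂ) : 0 ≤ aval z := by
  rw [aval]
  have h1 := Complex.neg_pi_lt_arg z
  have h2 := Real.pi_pos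
  split <;> [linarith; linarith [not_lt.mp ‹¬ Complex.arg z < 0›]]

lemma aval_lt (z : ℂ) : aval z < 2 * Real.pi := by
  rw [aval]
  have h1 := Complex.arg_le_pi z
  have h2 := Real.pi_pos
  split <;> [linarith; linarith]

lemma exp_aval (z : ℂ) :
    ((‖z‖ : ℝ) : ℂ) * Complex.exp ((aval z : ℂ) * Complex.I) = z := by
  rw [aval]
  split
  · push_cast
    rw [add_mul, Complex.exp_add]
    have h2 : Complex.exp (2 * (Real.pi : ℂ) * Complex.I) = 1 := by
      exact_mod_cast Complex.exp_two_pi_mul_I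
    rw [h2, mul_one]
    exact Complex.norm_mul_exp_arg_mul_I z
  · push_cast
    rw [add_zero]
    exact Complex.norm_mul_exp_arg_mul_I z

lemma jdx_le (z : ℂ) {Δ : ℝ} (hΔpos : 0 < Δ) : (jdxF z Δ : ℝ) * Δ ≤ aval z := by
  have h1 : (jdxF z Δ : ℝ) ≤ aval z / Δ :=
    Nat.floor_le (div_nonneg (aval_nonneg z) hΔpos.le)
  have := mul_le_mul_of_nonneg_right h1 hΔpos.le
  rwa [div_mul_cancel₀ _ hΔpos.ne'] at this

lemma jdx_ge (z : ℂ) {Δ : ℝ} (hΔpos : 0 < Δ) : aval z - (jdxF z Δ : ℝ) * Δ ≤ Δ := by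
  have h1 : aval z / Δ < (jdxF z Δ : ℝ) + 1 := Nat.lt_floor_add_one _
  have := mul_le_mul_of_nonneg_right h1.le hΔpos.le
  rw [div_mul_cancel₀ _ hΔpos.ne'] at this
  nlinarith

lemma jdx_lt (z : ℂ) {Δ : ℝ} (hΔpos : 0 < Δ) {J : ℕ} (hJΔ : 2 * Real.pi ≤ (J : ℝ) * Δ) :
    jdxF z Δ < J := by
  rw [jdxF, Nat.floor_lt (div_nonneg (aval_nonneg z) hΔpos.le)]
  rw [div_lt_iff₀ hΔpos]
  calc aval z < 2 * Real.pi := aval_lt z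
    _ ≤ (J : ℝ) * Δ := hJΔ

lemma exp_norm_one (x : ℝ) : ‖Complex.exp ((x : ℂ) * Complex.I)‖ = 1 := by
  exact Complex.norm_exp_ofReal_mul_I x

lemma exp_sub_one_small {ψ : ℝ} (h0 : 0 ≤ ψ) (h1 : ψ ≤ 1) :
    ‖Complex.exp ((ψ : ℂ) * Complex.I) - 1‖ ≤ 2 * ψ := by
  have habs : ‖(ψ : ℂ) * Complex.I‖ = ψ := by
    rw [norm_mul, Complex.norm_real, Complex.norm_I, mul_one, Real.norm_eq_abs, abs_of_nonneg h0]
  calc ‖Complex.exp ((ψ : ℂ) * Complex.I) - 1‖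
      ≤ 2 * ‖(ψ : ℂ) * Complex.I‖ :=
        Complex.norm_exp_sub_one_le (by rw [habs]; exact h1)
    _ = 2 * ψ := by rw [habs]

lemma arg_split (z : ℂ) {Δ : ℝ} (hΔpos : 0 < Δ) :
    z = ((‖z‖ : ℝ) : ℂ)
        * Complex.exp ((((jdxF z Δ : ℝ) * Δ : ℝ) : ℂ) * Complex.I)
        * Complex.exp (((aval z - (jdxF z Δ : ℝ) * Δ : ℝ) : ℂ) * Complex.I) := by
  rw [mul_assoc, ← Complex.exp_add]
  have : (((jdxF z Δ : ℝ) * Δ : ℝ) : ℂ) * Complex.I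
      + ((aval z - (jdxF z Δ : ℝ) * Δ : ℝ) : ℂ) * Complex.I = (aval z : ℂ) * Complex.I := by
    push_cast
    ring
  rw [this, exp_aval]

/-! ### the main lemma on the span -/

set_option maxHeartbeats 1000000 in
lemma main_span (hp : 0 < p) (hp1 : p ≤ 1) (hC : 0 < C) (hG : Good bs C)
    {f g : X} (hf : f ∈ Submodule.span ℂ (Set.range bs.e))
    (hg : g ∈ Submodule.span ℂ (Set.range bs.e))
    (hdisj : Disjoint (bs.supp f) (bs.supp g)) :
    bs.N f ^ p ≤ KPC C p * bs.N (f + g) ^ p := by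
  classical
  obtain ⟨hsmall, hΔle1, hJpos⟩ := JC_facts hp hC
  set J : ℕ := JC C p with hJ
  set Δ : ℝ := 2 * Real.pi / (J : ℝ) with hΔ
  have hπ := Real.pi_pos
  have hΔpos : 0 < Δ := by rw [hΔ]; positivity
  have hJΔ : 2 * Real.pi ≤ (J : ℝ) * Δ := by
    rw [hΔ, mul_div_cancel₀ _ (by positivity : (J:ℝ) ≠ 0)]
  obtain ⟨Ff, hFf, hFf0⟩ := exists_rep bs hf
  obtain ⟨Fg, hFg, hFg0⟩ := exists_rep bs hg
  set F : Finset ℕ := Ff ∪ Fg with hF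
  have hfF : f = ∑ n ∈ F, bs.coord n f • bs.e n := by
    conv_lhs => rw [hFf]
    exact Finset.sum_subset Finset.subset_union_left
      (fun n _ hn => by rw [hFf0 n hn, zero_smul])
  have hgF : g = ∑ n ∈ F, bs.coord n g • bs.e n := by
    conv_lhs => rw [hFg]
    exact Finset.sum_subset Finset.subset_union_right
      (fun n _ hn => by rw [hFg0 n hn, zero_smul])
  have hrepH : f + g = ∑ n ∈ F, bs.coord n (f + g) • bs.e n := by
    conv_lhs => rw [hfF, hgF]
    rw [← Finset.sum_add_distrib]
    refine Finset.sum_congr rfl fun n hn => ?_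
    rw [map_add, add_smul]
  have hch : ∀ n : ℕ, bs.coord n g ≠ 0 → bs.coord n (f + g) = bs.coord n g := by
    intro n hn
    have hnf : bs.coord n f = 0 := by
      by_contra hf0
      exact (Set.disjoint_left.mp hdisj (by simpa [PBasis.supp] using hf0)) hn
    rw [map_add, hnf, zero_add]
  set B' : Finset ℕ := Fg.filter (fun n => bs.coord n g ≠ 0) with hB'
  have hgB' : g = ∑ n ∈ B', bs.coord n g • bs.e n := by
    conv_lhs => rw [hFg]
    symm
    apply Finset.sum_subset (Finset.filter_subset _ _)
    intro n hn hnB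
    have hz : bs.coord n g = 0 := by
      by_contra hne
      exact hnB (Finset.mem_filter.mpr ⟨hn, hne⟩)
    rw [hz, zero_smul]
  set Sj : ℕ → Finset ℕ := fun j => B'.filter (fun n => jdxF (bs.coord n g) Δ = j) with hSj
  have hfib : g = ∑ j ∈ Finset.range J,
      ∑ n ∈ B'.filter (fun n => jdxF (bs.coord n g) Δ = j), bs.coord n (f + g) • bs.e n := by
    have h1 : ∀ j ∈ Finset.range J,
        (∑ n ∈ B'.filter (fun n => jdxF (bs.coord n g) Δ = j), bs.coord n (f + g) • bs.e n)
          = ∑ n ∈ B'.filter (fun n => jdxF (bs.coord n g) Δ = j), bs.coord n g • bs.e n := by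
      intro j _
      refine Finset.sum_congr rfl fun n hn => ?_
      have hne : bs.coord n g ≠ 0 := (Finset.mem_filter.mp (Finset.mem_filter.mp hn).1).2
      rw [hch n hne]
    rw [Finset.sum_congr rfl h1,
      Finset.sum_fiberwise_of_maps_to
        (fun n _ => Finset.mem_range.mpr (jdx_lt (bs.coord n g) hΔpos hJΔ))
        (fun n => bs.coord n g • bs.e n)]
    exact hgB'
  -- bound each sector slice
  have hsec : ∀ j, bs.N (∑ n ∈ B'.filter (fun n => jdxF (bs.coord n g) Δ = j),
      bs.coord n (f + g) • bs.e n) ^ p ≤ 4 * gC C p * bs.N (f + g) ^ p := by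
    intro j
    apply sector bs hp hC hG F _ ?hsub (f + g) hrepH
      (Complex.exp ((((j : ℝ) * Δ : ℝ) : ℂ) * Complex.I)) (exp_norm_one _)
      (fun n => Complex.exp (((aval (bs.coord n g) - (jdxF (bs.coord n g) Δ : ℝ) * Δ : ℝ) : ℂ)
        * Complex.I))
      ?hlam (2 * Δ) (by positivity) ?hlam1 hsmall
    case hsub =>
      intro n hn
      have h1 : n ∈ B' := (Finset.mem_filter.mp hn).1
      have h2 : n ∈ Fg := (Finset.mem_filter.mp h1).1
      exact Finset.mem_union_right _ h2
    case hlam =>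
      intro n hn
      have hjn : jdxF (bs.coord n g) Δ = j := (Finset.mem_filter.mp hn).2
      have hne : bs.coord n g ≠ 0 := (Finset.mem_filter.mp (Finset.mem_filter.mp hn).1).2
      rw [hch n hne]
      conv_lhs => rw [arg_split (bs.coord n g) hΔpos]
      simp only [hjn]
    case hlam1 =>
      intro n hn
      have h0 : 0 ≤ aval (bs.coord n g) - (jdxF (bs.coord n g) Δ : ℝ) * Δ := by
        have := jdx_le (bs.coord n g) hΔpos
        linarith
      have h1 : aval (bs.coord n g) - (jdxF (bs.coord n g) Δ : ℝ) * Δ ≤ Δ :=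
        jdx_ge (bs.coord n g) hΔpos
      calc ‖Complex.exp (((aval (bs.coord n g) - (jdxF (bs.coord n g) Δ : ℝ) * Δ : ℝ) : ℂ)
            * Complex.I) - 1‖
          ≤ 2 * (aval (bs.coord n g) - (jdxF (bs.coord n g) Δ : ℝ) * Δ) :=
            exp_sub_one_small h0 (le_trans h1 hΔle1)
        _ ≤ 2 * Δ := by linarith
  -- assemble
  have hNf : bs.N f ^ p ≤ bs.N (f + g) ^ p
      + ∑ j ∈ Finset.range J, bs.N (∑ n ∈ B'.filter (fun n => jdxF (bs.coord n g) Δ = j),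
          bs.coord n (f + g) • bs.e n) ^ p := by
    have hfeq : f = (f + g) - ∑ j ∈ Finset.range J,
        ∑ n ∈ B'.filter (fun n => jdxF (bs.coord n g) Δ = j),
          bs.coord n (f + g) • bs.e n := by
      conv_rhs => rw [← hfib]
      abel
    calc bs.N f ^ p = bs.N ((f + g) - ∑ j ∈ Finset.range J,
          ∑ n ∈ B'.filter (fun n => jdxF (bs.coord n g) Δ = j),
            bs.coord n (f + g) • bs.e n) ^ p := by rw [← hfeq]
      _ ≤ bs.N (f + g) ^ p + bs.N (∑ j ∈ Finset.range J,
          ∑ n ∈ B'.filter (fun n => jdxF (bs.coord n g) Δ = j),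
            bs.coord n (f + g) • bs.e n) ^ p := Nsub_pow bs hp _ _
      _ ≤ _ := by
        have := Nsum bs hp (Finset.range J) (fun j =>
          ∑ n ∈ B'.filter (fun n => jdxF (bs.coord n g) Δ = j), bs.coord n (f + g) • bs.e n)
        linarith
  have hsumb : ∑ j ∈ Finset.range J, bs.N (∑ n ∈ B'.filter
        (fun n => jdxF (bs.coord n g) Δ = j), bs.coord n (f + g) • bs.e n) ^ p
      ≤ (J : ℝ) * (4 * gC C p * bs.N (f + g) ^ p) := by
    calc _ ≤ ∑ _j ∈ Finset.range J, 4 * gC C p * bs.N (f + g) ^ p :=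
          Finset.sum_le_sum fun j _ => hsec j
      _ = (J : ℝ) * (4 * gC C p * bs.N (f + g) ^ p) := by
          rw [Finset.sum_const, Finset.card_range, nsmul_eq_mul]
  rw [KPC]
  have hrw : (1 + (JC C p : ℝ) * (4 * gC C p)) * bs.N (f + g) ^ p
      = bs.N (f + g) ^ p + (J : ℝ) * (4 * gC C p * bs.N (f + g) ^ p) := by
    rw [← hJ]; ring
  rw [hrw]
  linarith

/-! ### unconditionality on the span and extension to X -/

lemma uncond_span (hp : 0 < p) (hp1 : p ≤ 1) (hC : 0 < C) (hG : Good bs C)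
    (A : Finset ℕ) {u : X} (hu : u ∈ Submodule.span ℂ (Set.range bs.e)) :
    bs.N (bs.proj A u) ^ p ≤ KPC C p * bs.N u ^ p := by
  classical
  have hsum : bs.proj A u + (u - bs.proj A u) = u := by abel
  have hdisj : Disjoint (bs.supp (bs.proj A u)) (bs.supp (u - bs.proj A u)) := by
    rw [Set.disjoint_left]
    intro n hn hn2
    simp only [PBasis.supp, Set.mem_setOf_eq] at hn hn2
    rw [proj_coord] at hn
    by_cases hA : n ∈ A
    · apply hn2
      rw [map_sub, proj_coord, if_pos hA, sub_self]
    · rw [if_neg hA] at hn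
      exact hn rfl
  have := main_span bs hp hp1 hC hG (proj_mem bs A u)
    (Submodule.sub_mem _ hu (proj_mem bs A u)) hdisj
  rwa [hsum] at this

lemma uncond_X (hp : 0 < p) (hp1 : p ≤ 1) (hC : 0 < C) (hG : Good bs C)
    (A : Finset ℕ) (f : X) :
    bs.N (bs.proj A f) ^ p ≤ KPC C p * bs.N f ^ p := by
  classical
  obtain ⟨c₁, hc₁⟩ := bs.coord_bdd
  obtain ⟨c₂, hc₂⟩ := bs.e_bdd
  set c₁' : ℝ := max c₁ 0 with hc₁'
  set c₂' : ℝ := max c₂ 0 with hc₂'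
  have hc₁'0 : 0 ≤ c₁' := le_max_right _ _
  have hc₂'0 : 0 ≤ c₂' := le_max_right _ _
  have hKP0 : 0 ≤ KPC C p := (KPC_pos hp hC).le
  apply le_of_forall_eps hp
    (c := KPC C p + (A.card : ℝ) * (c₁' * c₂') ^ p)
    (add_nonneg hKP0 (by positivity))
  intro ε hε
  obtain ⟨u, huspan, hunear⟩ := bs.dense_span f ε hε
  have hfu : bs.N (f - u) < ε := hunear
  have hsplit : bs.proj A f = bs.proj A u + bs.proj A (f - u) := by
    rw [← proj_add]
    congr 1
    abel
  have h1 : bs.N (bs.proj A f) ^ p ≤ bs.N (bs.proj A u) ^ p + bs.N (bs.proj A (f - u)) ^ p := by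
    rw [hsplit]
    exact bs.N_padd _ _
  have h2 : bs.N (bs.proj A u) ^ p ≤ KPC C p * (bs.N f ^ p + ε ^ p) := by
    refine le_trans (uncond_span bs hp hp1 hC hG A huspan) ?_
    apply mul_le_mul_of_nonneg_left _ hKP0
    have hu2 : bs.N u ^ p ≤ bs.N f ^ p + bs.N (f - u) ^ p := by
      have := Nsub_pow bs hp f (f - u)
      simpa [sub_sub_cancel] using this
    have h3 : bs.N (f - u) ^ p ≤ ε ^ p :=
      Real.rpow_le_rpow (bs.N_nonneg _) hfu.le hp.le
    linarith
  have h4 : bs.N (bs.proj A (f - u)) ^ p ≤ (A.card : ℝ) * (c₁' * c₂') ^ p * ε ^ p := by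
    refine le_trans (Nsum bs hp A (fun n => bs.coord n (f - u) • bs.e n)) ?_
    have hterm : ∀ n ∈ A, bs.N (bs.coord n (f - u) • bs.e n) ^ p ≤ (c₁' * c₂') ^ p * ε ^ p := by
      intro n _
      rw [bs.N_smul]
      have hb : ‖bs.coord n (f - u)‖ * bs.N (bs.e n) ≤ (c₁' * ε) * c₂' := by
        apply mul_le_mul _ _ (bs.N_nonneg _) (mul_nonneg hc₁'0 hε.le)
        · calc ‖bs.coord n (f - u)‖ ≤ c₁ * bs.N (f - u) := hc₁ n (f - u)
            _ ≤ c₁' * ε := by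
              apply mul_le_mul (le_max_left _ _) hfu.le (bs.N_nonneg _) hc₁'0
        · exact le_trans (hc₂ n) (le_max_left _ _)
      calc (‖bs.coord n (f - u)‖ * bs.N (bs.e n)) ^ p ≤ ((c₁' * ε) * c₂') ^ p := by
            apply Real.rpow_le_rpow (mul_nonneg (norm_nonneg _) (bs.N_nonneg _)) hb hp.le
        _ = (c₁' * c₂') ^ p * ε ^ p := by
            rw [show (c₁' * ε) * c₂' = (c₁' * c₂') * ε by ring,
              Real.mul_rpow (mul_nonneg hc₁'0 hc₂'0) hε.le]
    calc ∑ n ∈ A, bs.N (bs.coord n (f - u) • bs.e n) ^ p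
        ≤ ∑ _n ∈ A, (c₁' * c₂') ^ p * ε ^ p := Finset.sum_le_sum hterm
      _ = (A.card : ℝ) * (c₁' * c₂') ^ p * ε ^ p := by
          rw [Finset.sum_const, nsmul_eq_mul]; ring
  calc bs.N (bs.proj A f) ^ p
      ≤ bs.N (bs.proj A u) ^ p + bs.N (bs.proj A (f - u)) ^ p := h1
    _ ≤ KPC C p * (bs.N f ^ p + ε ^ p) + (A.card : ℝ) * (c₁' * c₂') ^ p * ε ^ p := by linarith
    _ = KPC C p * bs.N f ^ p + ε ^ p * (KPC C p + (A.card : ℝ) * (c₁' * c₂') ^ p) := by ring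

set_option maxHeartbeats 1000000 in
lemma disjoint_X (hp : 0 < p) (hp1 : p ≤ 1) (hC : 0 < C) (hG : Good bs C)
    {f g : X} (hdisj : Disjoint (bs.supp f) (bs.supp g)) :
    bs.N f ^ p ≤ KPC C p * bs.N (f + g) ^ p := by
  classical
  have hKP0 : 0 ≤ KPC C p := (KPC_pos hp hC).le
  apply le_of_forall_eps hp (c := 1 + 2 * KPC C p) (by linarith)
  intro ε hε
  obtain ⟨u, huspan, hunear⟩ := bs.dense_span f ε hε
  obtain ⟨F, hF, hF0⟩ := exists_rep bs huspan
  set A : Finset ℕ := F.filter (fun n => bs.coord n f ≠ 0) with hA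
  have hAF : A ⊆ F := Finset.filter_subset _ _
  -- proj A f = proj A (f + g)
  have h1 : bs.proj A f = bs.proj A (f + g) := by
    refine Finset.sum_congr rfl fun n hn => ?_
    have hnf : bs.coord n f ≠ 0 := (Finset.mem_filter.mp hn).2
    have hng : bs.coord n g = 0 := by
      by_contra hg0
      exact (Set.disjoint_left.mp hdisj (by simpa [PBasis.supp] using hnf))
        (by simpa [PBasis.supp] using hg0)
    rw [map_add, hng, add_zero]
  have h2 : bs.N (bs.proj A (f + g)) ^ p ≤ KPC C p * bs.N (f + g) ^ p :=
    uncond_X bs hp hp1 hC hG A (f + g)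
  -- decomposition of f - proj A f
  have hu : bs.proj (F \ A) u = u - bs.proj A u := by
    have : bs.proj (F \ A) u + bs.proj A u = u := by
      conv_rhs => rw [hF]
      exact Finset.sum_sdiff hAF
    linear_combination (norm := abel) this
  have h4 : bs.proj (F \ A) u = bs.proj (F \ A) (u - f) := by
    refine Finset.sum_congr rfl fun n hn => ?_
    have hnf : bs.coord n f = 0 := by
      rcases Finset.mem_sdiff.mp hn with ⟨hnF, hnA⟩
      by_contra hne
      exact hnA (Finset.mem_filter.mpr ⟨hnF, hne⟩)
    rw [map_sub, hnf, sub_zero]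
  have h5 : bs.proj A f = bs.proj A u + bs.proj A (f - u) := by
    rw [← proj_add]
    congr 1
    abel
  have h6 : f - bs.proj A f = (f - u) + bs.proj (F \ A) (u - f) - bs.proj A (f - u) := by
    rw [← h4, hu, h5]
    abel
  -- norms of error pieces
  have hfu : bs.N (f - u) ^ p ≤ ε ^ p :=
    Real.rpow_le_rpow (bs.N_nonneg _) hunear.le hp.le
  have huf : bs.N (u - f) ^ p ≤ ε ^ p := by
    have : bs.N (u - f) = bs.N (f - u) := by rw [← Nneg bs (u - f), neg_sub]
    rw [this]; exact hfu
  have h7 : bs.N (bs.proj (F \ A) (u - f)) ^ p ≤ KPC C p * ε ^ p := by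
    refine le_trans (uncond_X bs hp hp1 hC hG _ _) ?_
    exact mul_le_mul_of_nonneg_left huf hKP0
  have h8 : bs.N (bs.proj A (f - u)) ^ p ≤ KPC C p * ε ^ p := by
    refine le_trans (uncond_X bs hp hp1 hC hG _ _) ?_
    exact mul_le_mul_of_nonneg_left hfu hKP0
  have h9 : bs.N (f - bs.proj A f) ^ p ≤ ε ^ p + KPC C p * ε ^ p + KPC C p * ε ^ p := by
    rw [h6]
    calc bs.N ((f - u) + bs.proj (F \ A) (u - f) - bs.proj A (f - u)) ^ p
        ≤ bs.N ((f - u) + bs.proj (F \ A) (u - f)) ^ p + bs.N (bs.proj A (f - u)) ^ p :=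
          Nsub_pow bs hp _ _
      _ ≤ (bs.N (f - u) ^ p + bs.N (bs.proj (F \ A) (u - f)) ^ p)
            + bs.N (bs.proj A (f - u)) ^ p := by
          have := bs.N_padd (f - u) (bs.proj (F \ A) (u - f))
          linarith
      _ ≤ ε ^ p + KPC C p * ε ^ p + KPC C p * ε ^ p := by linarith
  have h10 : bs.N f ^ p ≤ bs.N (bs.proj A f) ^ p + bs.N (f - bs.proj A f) ^ p := by
    have heq : f = bs.proj A f + (f - bs.proj A f) := by abel
    conv_lhs => rw [heq]
    exact bs.N_padd _ _
  have h2' : bs.N (bs.proj A f) ^ p ≤ KPC C p * bs.N (f + g) ^ p := by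
    rw [h1]; exact h2
  calc bs.N f ^ p ≤ bs.N (bs.proj A f) ^ p + bs.N (f - bs.proj A f) ^ p := h10
    _ ≤ KPC C p * bs.N (f + g) ^ p + (ε ^ p + KPC C p * ε ^ p + KPC C p * ε ^ p) := by
        linarith
    _ = KPC C p * bs.N (f + g) ^ p + ε ^ p * (1 + 2 * KPC C p) := by ring

end PCLem

end Lemma32Aux


/-- (Complex case of Lemma 3.2.) For every `0 < p ≤ 1` and `C > 0` there is
`K = K(C,p) > 0` such that: for any basis of a complex `p`-Banach space, if
`‖f‖ ≤ C‖f + g‖` for all disjointly supported `f, g` in the span with `g` having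
nonnegative real coefficients, then `‖f‖ ≤ K‖f + g‖` for all disjointly supported
`f, g ∈ X`; in particular the basis is `K`-unconditional. -/
theorem positive_coeff_implies_unconditional_complex (p C : ℝ) (hp : 0 < p) (hp1 : p ≤ 1)
    (hC : 0 < C) :
    ∃ K : ℝ, 0 < K ∧
      ∀ (X : Type*) [AddCommGroup X] [Module ℂ X] (bs : PBasis ℂ X p),
        (∀ f g : X, f ∈ Submodule.span ℂ (Set.range bs.e) →
          g ∈ Submodule.span ℂ (Set.range bs.e) →
          (∀ n : ℕ, (bs.coord n g).im = 0 ∧ 0 ≤ (bs.coord n g).re) →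
          Disjoint (bs.supp f) (bs.supp g) → bs.N f ≤ C * bs.N (f + g)) →
        (∀ f g : X, Disjoint (bs.supp f) (bs.supp g) → bs.N f ≤ K * bs.N (f + g)) ∧
          bs.IsUncondWith K := by
  refine ⟨PCLem.KC C p, PCLem.KC_pos hp hC, ?_⟩
  intro X _ _ bs hG
  have hG' : PCLem.Good bs C := hG
  have hKpow := PCLem.KC_pow hp hC
  have hK0 := PCLem.KC_pos hp hC
  constructor
  · intro f g hdisj
    have h1 := PCLem.disjoint_X bs hp hp1 hC hG' hdisj
    rw [PCLem.rpow_le_iff hp (bs.N_nonneg f)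
      (mul_nonneg hK0.le (bs.N_nonneg (f + g)))]
    rwa [Real.mul_rpow hK0.le (bs.N_nonneg _), hKpow]
  · intro A f
    have h1 := PCLem.uncond_X bs hp hp1 hC hG' A f
    rw [PCLem.rpow_le_iff hp (bs.N_nonneg _)
      (mul_nonneg hK0.le (bs.N_nonneg f))]
    rwa [Real.mul_rpow hK0.le (bs.N_nonneg _), hKpow]
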